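/- Under the Volterra equation hypotheses and H*(n) → ∞, if t^H_n ∈ {1,…,n} satisfies |H(t^H_n)| = max_{1≤j≤n} |H(j)|, then lim_{n→∞} |x(t^H_n)| / |H(t^H_n)| = 1. -/

import Mathlib

open Filter Finset Topology

/-- Running maximum of `g` over `{1,…,n}` (value `0` when `n = 0`). -/
noncomputable def runMax1 (g : ℕ → ℝ) (n : ℕ) : ℝ :=
  if h : 1 ≤ n then (Finset.Icc 1 n).sup' (Finset.nonempty_Icc.mpr h) g else 0

/-- Running maximum of `g` over `{0,…,n}`. -/
noncomputable def runMax0 (g : ℕ → ℝ) (n : ℕ) : ℝ :=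
  (Finset.Icc 0 n).sup' (Finset.nonempty_Icc.mpr (Nat.zero_le n)) g

lemma le_runMax0 (g : ℕ → ℝ) {j n : ℕ} (h : j ≤ n) : g j ≤ runMax0 g n :=
  Finset.le_sup' g (Finset.mem_Icc.mpr ⟨Nat.zero_le _, h⟩)

lemma runMax0_le (g : ℕ → ℝ) {n : ℕ} {a : ℝ} (h : ∀ j ≤ n, g j ≤ a) : runMax0 g n ≤ a :=
  Finset.sup'_le _ _ fun j hj => h j (Finset.mem_Icc.mp hj).2

lemma runMax0_mono (g : ℕ → ℝ) : Monotone (runMax0 g) := fun _ _ hmn =>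
  runMax0_le g fun _ hj => le_runMax0 g (hj.trans hmn)

lemma le_runMax1 (g : ℕ → ℝ) {j n : ℕ} (h1 : 1 ≤ j) (h : j ≤ n) : g j ≤ runMax1 g n := by
  rw [runMax1, dif_pos (h1.trans h)]
  exact Finset.le_sup' g (Finset.mem_Icc.mpr ⟨h1, h⟩)

lemma runMax1_le (g : ℕ → ℝ) {n : ℕ} {a : ℝ} (ha : 0 ≤ a) (h : ∀ j, 1 ≤ j → j ≤ n → g j ≤ a) :
    runMax1 g n ≤ a := by
  rw [runMax1]
  split
  · exact Finset.sup'_le _ _ fun j hj => h j (Finset.mem_Icc.mp hj).1 (Finset.mem_Icc.mp hj).2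
  · exact ha

lemma runMax1_nonneg (g : ℕ → ℝ) (hg : ∀ j, 0 ≤ g j) (n : ℕ) : 0 ≤ runMax1 g n := by
  rw [runMax1]
  split
  · rename_i h; exact (hg 1).trans (Finset.le_sup' g (Finset.mem_Icc.mpr ⟨le_rfl, h⟩))
  · exact le_rfl

lemma runMax1_mono (g : ℕ → ℝ) (hg : ∀ j, 0 ≤ g j) : Monotone (runMax1 g) := fun _ n hmn =>
  runMax1_le g (runMax1_nonneg g hg n) fun _ h1 h2 => le_runMax1 g h1 (h2.trans hmn)

lemma sub_bound (f : ℝ → ℝ) (hf : Continuous f)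
    (hsub : Filter.Tendsto (fun y => f y / y) (Filter.cocompact ℝ) (nhds 0)) :
    ∀ ε > 0, ∃ C, 0 ≤ C ∧ ∀ y, |f y| ≤ ε * |y| + C := by
  intro ε hε
  have h1 : {y : ℝ | |f y / y| < ε} ∈ Filter.cocompact ℝ := by
    have h0 := hsub (Metric.ball_mem_nhds (0:ℝ) hε)
    rw [Filter.mem_map] at h0
    filter_upwards [h0] with y hy
    simpa [Metric.mem_ball, Real.dist_eq, abs_div] using hy
  rw [Filter.mem_cocompact] at h1
  obtain ⟨s, hs, hsub'⟩ := h1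
  obtain ⟨R, hR⟩ := hs.isBounded.subset_closedBall 0
  set R' : ℝ := max R 0 with hR'
  have hc : IsCompact (Set.Icc (-R') R') := isCompact_Icc
  obtain ⟨z, hz, hmax⟩ := hc.exists_isMaxOn ⟨0, by constructor <;> simp [hR']⟩
    (continuous_abs.comp hf).continuousOn
  refine ⟨max |f z| 0, le_max_right _ _, fun y => ?_⟩
  by_cases hy : |y| ≤ R'
  · have hmem : y ∈ Set.Icc (-R') R' := abs_le.mp hy
    have h4 : |f y| ≤ |f z| := hmax hmem
    nlinarith [abs_nonneg y, le_max_left |f z| 0]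
  · push_neg at hy
    have hy0 : y ≠ 0 := by
      intro h
      rw [h] at hy
      simp [hR'] at hy
    have hys : y ∉ s := fun h => hy.not_ge (le_trans (by simpa [Real.dist_eq] using hR h) (le_max_left _ _))
    have h2 : |f y| / |y| < ε := by simpa [abs_div] using hsub' hys
    have hay : 0 < |y| := abs_pos.mpr hy0
    have h3 : |f y| < ε * |y| := by
      rw [div_lt_iff₀ hay] at h2; linarith
    nlinarith [le_max_right |f z| 0]

set_option maxHeartbeats 1000000 in
theorem stmt6
(f : ℝ → ℝ) (k H x : ℕ → ℝ) (ξ : ℝ)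
    (hf : Continuous f)
    (hsub : Filter.Tendsto (fun y => f y / y) (Filter.cocompact ℝ) (nhds 0))
    (hk : Summable (fun j => |k j|))
    (hx0 : x 0 = ξ)
    (hx : ∀ n : ℕ, x (n + 1) = H (n + 1) + ∑ j ∈ Finset.range (n + 1), k (n - j) * f (x j))
    (hH : Filter.Tendsto (fun n => runMax1 (fun j => |H j|) n) Filter.atTop Filter.atTop)
    (t : ℕ → ℕ)
    (ht : ∀ n : ℕ, 1 ≤ n → 1 ≤ t n ∧ t n ≤ n ∧ |H (t n)| = runMax1 (fun j => |H j|) n) :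
    Filter.Tendsto (fun n => |x (t n)| / |H (t n)|) Filter.atTop (nhds 1) := by
  set K : ℝ := ∑' j, |k j| with hKdef
  have hK0 : 0 ≤ K := tsum_nonneg fun j => abs_nonneg _
  set Hs : ℕ → ℝ := fun n => runMax1 (fun j => |H j|) n with hHsdef
  set M : ℕ → ℝ := fun n => runMax0 (fun j => |x j|) n with hMdef
  have hHs0 : ∀ n, 0 ≤ Hs n := fun n => runMax1_nonneg _ (fun j => abs_nonneg _) n
  have hHsmono : Monotone Hs := runMax1_mono _ (fun j => abs_nonneg _)
  have hM0 : ∀ n, 0 ≤ M n := fun n => (abs_nonneg (x 0)).trans (le_runMax0 (fun j => |x j|) (Nat.zero_le n))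
  have hMmono : Monotone M := runMax0_mono _
  have hsumk : ∀ n : ℕ, ∑ j ∈ Finset.range (n+1), |k (n - j)| ≤ K := by
    intro n
    have h1 : ∑ j ∈ Finset.range (n+1), |k (n - j)| = ∑ j ∈ Finset.range (n+1), |k j| := by
      have := Finset.sum_range_reflect (fun j => |k j|) (n+1)
      simpa using this
    rw [h1]
    exact Summable.sum_le_tsum _ (fun i _ => abs_nonneg _) hk
  -- the key estimate
  have key : ∀ ε C : ℝ, 0 ≤ ε → 0 ≤ C → (∀ y, |f y| ≤ ε * |y| + C) →
      ∀ n : ℕ, |x (n+1) - H (n+1)| ≤ K * (ε * M n + C) := by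
    intro ε C hε hC hfb n
    have hMC : 0 ≤ ε * M n + C := by nlinarith [hM0 n]
    rw [hx n, add_sub_cancel_left]
    calc |∑ j ∈ Finset.range (n+1), k (n - j) * f (x j)|
        ≤ ∑ j ∈ Finset.range (n+1), |k (n - j) * f (x j)| :=
          Finset.abs_sum_le_sum_abs _ _
      _ ≤ ∑ j ∈ Finset.range (n+1), |k (n - j)| * (ε * M n + C) := by
          apply Finset.sum_le_sum
          intro j hj
          rw [abs_mul]
          apply mul_le_mul_of_nonneg_left _ (abs_nonneg _)
          calc |f (x j)| ≤ ε * |x j| + C := hfb (x j)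
            _ ≤ ε * M n + C := by
                have : |x j| ≤ M n := le_runMax0 (fun j => |x j|) (Nat.lt_succ_iff.mp (Finset.mem_range.mp hj))
                nlinarith
      _ = (∑ j ∈ Finset.range (n+1), |k (n - j)|) * (ε * M n + C) := by
          rw [Finset.sum_mul]
      _ ≤ K * (ε * M n + C) := mul_le_mul_of_nonneg_right (hsumk n) hMC
  -- global growth bound on M with a fixed small ε₀
  obtain ⟨C₀, hC₀0, hfb₀⟩ := sub_bound f hf hsub (1/(2*(K+1))) (by positivity)
  have hε₀0 : (0:ℝ) ≤ 1/(2*(K+1)) := by positivity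
  have hKε₀ : K * (1/(2*(K+1))) ≤ 1/2 := by
    rw [show K * (1/(2*(K+1))) = K/(2*(K+1)) by ring,
      div_le_div_iff₀ (by positivity) (by norm_num)]
    nlinarith
  have bound : ∀ n, M n ≤ 2*|ξ| + 2*K*C₀ + 2*Hs n := by
    intro n
    induction n with
    | zero =>
      apply runMax0_le
      intro j hj
      interval_cases j
      have : Hs 0 ≥ 0 := hHs0 0
      rw [hx0]
      nlinarith [abs_nonneg ξ]
    | succ n ih =>
      apply runMax0_le
      intro j hj
      rcases Nat.lt_succ_iff_lt_or_eq.mp (Nat.lt_succ_of_le hj) with h | h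
      · have h1 : |x j| ≤ M n := le_runMax0 (fun j => |x j|) (Nat.lt_succ_iff.mp h)
        have h2 : Hs n ≤ Hs (n+1) := hHsmono (Nat.le_succ n)
        nlinarith
      · subst h
        have h1 := key (1/(2*(K+1))) C₀ hε₀0 hC₀0 hfb₀ n
        have h2 : |x (n+1)| ≤ |H (n+1)| + |x (n+1) - H (n+1)| := by
          have := abs_sub_abs_le_abs_sub (x (n+1)) (H (n+1))
          nlinarith [abs_nonneg (x (n+1) - H (n+1))]
        have h3 : |H (n+1)| ≤ Hs (n+1) := le_runMax1 (fun j => |H j|) (Nat.one_le_iff_ne_zero.mpr (Nat.succ_ne_zero n)) le_rfl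
        have h4 : K * ((1/(2*(K+1))) * M n + C₀) ≤ (1/2) * M n + K * C₀ := by
          have hMn := hM0 n
          nlinarith
        have h5 : Hs n ≤ Hs (n+1) := hHsmono (Nat.le_succ n)
        nlinarith [abs_nonneg ξ]
  -- the limit
  rw [Metric.tendsto_nhds]
  intro δ hδ
  have hK1 : (0:ℝ) < K + 1 := by linarith
  obtain ⟨C, hC0, hfb⟩ := sub_bound f hf hsub (δ/(8*(K+1))) (by positivity)
  set ε : ℝ := δ/(8*(K+1)) with hεdef
  have hε0 : 0 ≤ ε := by positivity
  have hKε : 2*K*ε ≤ δ/4 := by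
    rw [hεdef, show 2*K*(δ/(8*(K+1))) = (2*K*δ)/(8*(K+1)) by ring,
      div_le_div_iff₀ (by positivity) (by norm_num)]
    nlinarith
  set A : ℝ := 2*|ξ| + 2*K*C₀ with hAdef
  have hA0 : 0 ≤ A := by positivity
  set D : ℝ := K*ε*A + K*C with hDdef
  have hD0 : 0 ≤ D := by positivity
  have hT := (hH.eventually_ge_atTop (max 1 (2*(D+1)/δ)))
  filter_upwards [hT, Filter.eventually_ge_atTop 1] with n hTn hn1
  obtain ⟨ht1, ht2, ht3⟩ := ht n hn1
  have ht3' : |H (t n)| = Hs n := ht3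
  clear_value K Hs M ε A D
  have hW1 : (1:ℝ) ≤ Hs n := le_trans (le_max_left _ _) hTn
  have hW2 : 2*(D+1)/δ ≤ Hs n := le_trans (le_max_right _ _) hTn
  have hWpos : 0 < Hs n := lt_of_lt_of_le one_pos hW1
  -- estimate |x (t n) - H (t n)|
  have htn : t n - 1 + 1 = t n := Nat.succ_pred_eq_of_pos ht1
  have hkey := key ε C hε0 hC0 hfb (t n - 1)
  rw [htn] at hkey
  have hMtn : M (t n - 1) ≤ A + 2*Hs n := by
    calc M (t n - 1) ≤ M n := hMmono (le_trans (Nat.sub_le _ _) ht2)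
      _ ≤ A + 2*Hs n := by have := bound n; rw [hAdef]; linarith
  have hest : |x (t n) - H (t n)| ≤ D + (δ/4) * Hs n := by
    calc |x (t n) - H (t n)| ≤ K * (ε * M (t n - 1) + C) := hkey
      _ ≤ K * (ε * (A + 2*Hs n) + C) := by
          apply mul_le_mul_of_nonneg_left _ hK0
          nlinarith
      _ = D + (2*K*ε) * Hs n := by rw [hDdef]; ring
      _ ≤ D + (δ/4) * Hs n := by nlinarith [hHs0 n]
  have habs : |(|x (t n)| - Hs n)| ≤ |x (t n) - H (t n)| := by
    rw [← ht3']
    exact abs_abs_sub_abs_le_abs_sub _ _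
  have hDW : D / Hs n < δ/2 := by
    rw [div_lt_iff₀ hWpos]
    have h9 := (div_le_iff₀ hδ).mp hW2
    nlinarith
  rw [Real.dist_eq, ht3']
  have heq : |x (t n)| / Hs n - 1 = (|x (t n)| - Hs n) / Hs n := by
    rw [sub_div, div_self (ne_of_gt hWpos)]
  rw [heq, abs_div, abs_of_pos hWpos]
  rw [div_lt_iff₀ hWpos]
  calc |(|x (t n)| - Hs n)| ≤ D + (δ/4) * Hs n := le_trans habs hest
    _ < δ * Hs n := by
        have h1 : D < (δ/2) * Hs n := (div_lt_iff₀ hWpos).mp hDW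
        nlinarith
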